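/- Let K be a compact topological group with Haar probability measure m and let U ⊆ K be an open set for which there exists a finite set F ⊆ K with F·U = K. Then there exists an open m-Jordan measurable subset U' ⊆ U (i.e., m(∂U') = 0) such that F·U' = K. -/

import Mathlib

open MeasureTheory
open scoped Pointwise

theorem frontier_biUnion_finset_subset {X ι : Type*} [TopologicalSpace X] (s : Finset ι)
    (f : ι → Set X) : frontier (⋃ i ∈ s, f i) ⊆ ⋃ i ∈ s, frontier (f i) := by
  classical
  induction s using Finset.induction_on with
  | empty => simp
  | insert _ _ h ih =>
    rename_i a s'
    rw [Finset.set_biUnion_insert]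
    refine (frontier_union_subset _ _).trans ?_
    rw [Finset.set_biUnion_insert]
    exact Set.union_subset_union Set.inter_subset_left (Set.inter_subset_right.trans ih)

theorem aux_jordan {K : Type*} [TopologicalSpace K] [CompactSpace K] [T2Space K]
    [MeasurableSpace K] [BorelSpace K] (m : Measure K) [IsFiniteMeasure m]
    (U : Set K) (hU : IsOpen U) (x : K) (hx : x ∈ U) :
    ∃ V : Set K, x ∈ V ∧ V ⊆ U ∧ IsOpen V ∧ m (frontier V) = 0 := by
  obtain ⟨f, hf0, hf1, hfrange⟩ := exists_continuous_zero_one_of_isClosed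
    hU.isClosed_compl isClosed_singleton (by simpa using hx)
  have hcnt : Set.Countable { t : ℝ | 0 < m { a : K | f a = t } } :=
    Measure.countable_meas_level_set_pos (f.continuous.measurable)
  obtain ⟨t, ht, htc⟩ : ∃ t ∈ Set.Ioo (0:ℝ) 1, t ∉ { t : ℝ | 0 < m { a : K | f a = t } } := by
    by_contra h
    push_neg at h
    have : (Set.Ioo (0:ℝ) 1).Countable := hcnt.mono h
    have h2 := this.le_aleph0
    rw [Cardinal.mk_Ioo_real one_pos] at h2
    exact Cardinal.aleph0_lt_continuum.not_ge h2
  refine ⟨f ⁻¹' Set.Ioi t, ?_, ?_, isOpen_Ioi.preimage f.continuous, ?_⟩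
  · simp only [Set.mem_preimage, hf1 rfl, Set.mem_Ioi]
    exact ht.2
  · intro y hy
    by_contra hyU
    have : f y = 0 := hf0 hyU
    simp only [Set.mem_preimage, Set.mem_Ioi, this] at hy
    exact absurd (ht.1.trans hy) (lt_irrefl 0)
  · have hsub : frontier (f ⁻¹' Set.Ioi t) ⊆ { a : K | f a = t } := by
      intro y hy
      have h1 : y ∈ closure (f ⁻¹' Set.Ioi t) := hy.1
      have h2 : y ∉ interior (f ⁻¹' Set.Ioi t) := hy.2
      have hc : y ∈ f ⁻¹' Set.Ici t := by
        have : closure (f ⁻¹' Set.Ioi t) ⊆ f ⁻¹' Set.Ici t :=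
          closure_minimal (Set.preimage_mono Set.Ioi_subset_Ici_self)
            (isClosed_Ici.preimage f.continuous)
        exact this h1
      have ho : y ∉ f ⁻¹' Set.Ioi t := by
        intro hmem
        exact h2 ((isOpen_Ioi.preimage f.continuous).subset_interior_iff.mpr subset_rfl hmem)
      exact le_antisymm (not_lt.mp ho) hc
    have hnot : ¬ 0 < m { a : K | f a = t } := htc
    rw [not_lt, le_zero_iff] at hnot
    exact measure_mono_null hsub hnot

theorem stmt5 {K : Type*} [Group K] [TopologicalSpace K] [IsTopologicalGroup K]
    [CompactSpace K] [T2Space K] [MeasurableSpace K] [BorelSpace K]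
    (m : Measure K) [m.IsHaarMeasure] [IsProbabilityMeasure m]
    (U : Set K) (hU : IsOpen U) (F : Finset K) (hF : (F : Set K) * U = Set.univ) :
    ∃ U' : Set K, U' ⊆ U ∧ IsOpen U' ∧ m (frontier U') = 0 ∧
      (F : Set K) * U' = Set.univ := by
  choose V hxV hVU hVopen hVnull using fun x : U => aux_jordan m U hU x x.2
  have hcover : (Set.univ : Set K) ⊆ ⋃ p : F × U, (p.1 : K) • V p.2 := by
    intro k _
    have hk : k ∈ (F : Set K) * U := hF ▸ Set.mem_univ k
    obtain ⟨c, hc, u, hu, rfl⟩ := hk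
    exact Set.mem_iUnion.mpr ⟨(⟨c, hc⟩, ⟨u, hu⟩), Set.smul_mem_smul_set (hxV ⟨u, hu⟩)⟩
  obtain ⟨s, hs⟩ := isCompact_univ.elim_finite_subcover
    (fun p : F × U => (p.1 : K) • V p.2)
    (fun p => (hVopen p.2).smul _) hcover
  refine ⟨⋃ p ∈ s, V p.2, ?_, ?_, ?_, ?_⟩
  · exact Set.iUnion₂_subset fun p _ => hVU p.2
  · exact isOpen_biUnion fun p _ => hVopen p.2
  · refine measure_mono_null (frontier_biUnion_finset_subset s _) ?_
    refine measure_biUnion_null_iff (s.countable_toSet) |>.mpr ?_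
    exact fun p _ => hVnull p.2
  · apply Set.eq_univ_of_univ_subset
    intro k hk
    obtain ⟨p, hp, hkp⟩ := Set.mem_iUnion₂.mp (hs hk)
    obtain ⟨v, hv, rfl⟩ := hkp
    exact Set.mul_mem_mul p.1.2 (Set.mem_biUnion hp hv)
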